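/- arXiv:1010.1095 — 2 statements merged into one kernel-verified Lean document; each statement's English description precedes it below -/
import Mathlib

section
/- Let A be the algebra over C with invertible generators h, g satisfying hg = ε^d gh for ε a primitive l-th root of unity with gcd(l,d)=1. Then every irreducible finite-dimensional representation of A on which h^l and g^l act by fixed nonzero scalars α, β has dimension l, and such a representation is unique up to isomorphism (determined by the central character (α, β)). -/
open Module

private lemma comm_pow {V : Type*} [AddCommGroup V] [Module ℂ V]
    (H G : Module.End ℂ V) (q : ℂ) (hrel : H * G = q • (G * H)) (n : ℕ) :
    H * G ^ n = q ^ n • (G ^ n * H) := by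
  induction n with
  | zero => simp
  | succ n ih =>
    calc H * G ^ (n+1) = (H * G) * G ^ n := by rw [pow_succ', ← mul_assoc]
    _ = q • (G * (H * G ^ n)) := by rw [hrel, smul_mul_assoc, mul_assoc]
    _ = q • (G * (q ^ n • (G ^ n * H))) := by rw [ih]
    _ = (q * q ^ n) • (G * (G ^ n * H)) := by rw [mul_smul_comm, smul_smul]
    _ = q ^ (n+1) • (G ^ (n+1) * H) := by rw [pow_succ' q, pow_succ' G, mul_assoc]

private lemma unit_apply_ne {V : Type*} [AddCommGroup V] [Module ℂ V]
    {G : Module.End ℂ V} (hG : IsUnit G) {x : V} (hx : x ≠ 0) : G x ≠ 0 := by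
  intro h
  exact hx (((Module.End.isUnit_iff G).mp hG).injective (by simpa using h))

/-- Key structural lemma: an eigenvector of `H` generates a basis `G^i v`. -/
private lemma key {l : ℕ} (hl : 0 < l) {q : ℂ} (hq : IsPrimitiveRoot q l)
    {β : ℂ} {V : Type*} [AddCommGroup V] [Module ℂ V] [FiniteDimensional ℂ V]
    (H G : Module.End ℂ V) (hG : IsUnit G)
    (hrel : H * G = q • (G * H)) (hGl : G ^ l = β • (1 : Module.End ℂ V))
    (hirr : ∀ U : Submodule ℂ V, U.map H ≤ U → U.map G ≤ U → U = ⊥ ∨ U = ⊤)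
    {v : V} (hv : v ≠ 0) {lam : ℂ} (hlam : lam ≠ 0) (heig : H v = lam • v) :
    ∃ b : Basis (Fin l) ℂ V,
      (∀ i : Fin l, H (b i) = (q ^ (i : ℕ) * lam) • b i) ∧
      (∀ i : Fin l, G (b i) =
        if h : (i : ℕ) + 1 < l then b ⟨(i : ℕ) + 1, h⟩ else β • b ⟨0, hl⟩) := by
  have hwne : ∀ i : Fin l, (G ^ (i : ℕ)) v ≠ 0 := fun i => unit_apply_ne (hG.pow _) hv
  have hweig : ∀ i : Fin l, H ((G ^ (i : ℕ)) v) = (q ^ (i : ℕ) * lam) • (G ^ (i : ℕ)) v := by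
    intro i
    have h2 := congrArg (fun f : Module.End ℂ V => f v) (comm_pow H G q hrel (i : ℕ))
    simp only [Module.End.mul_apply, LinearMap.smul_apply] at h2
    rw [h2, heig, map_smul, smul_smul]
  have hinj : Function.Injective fun i : Fin l => q ^ (i : ℕ) * lam := by
    intro i j hij
    exact Fin.ext (hq.pow_inj i.isLt j.isLt (mul_right_cancel₀ hlam hij))
  have hli : LinearIndependent ℂ (fun i : Fin l => (G ^ (i : ℕ)) v) :=
    Module.End.eigenvectors_linearIndependent' H (fun i : Fin l => q ^ (i : ℕ) * lam)
      hinj _ (fun i => ⟨(Module.End.mem_eigenspace_iff).mpr (hweig i), hwne i⟩)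
  have hGw : ∀ i : Fin l, G ((G ^ (i : ℕ)) v) =
      if h : (i : ℕ) + 1 < l then (G ^ (((⟨(i : ℕ) + 1, h⟩ : Fin l)) : ℕ)) v
      else β • (G ^ (((⟨0, hl⟩ : Fin l)) : ℕ)) v := by
    intro i
    have h1 : G ((G ^ (i : ℕ)) v) = (G ^ ((i : ℕ) + 1)) v := by
      rw [pow_succ' G]; rfl
    by_cases h : (i : ℕ) + 1 < l
    · rw [dif_pos h, h1]
    · have hil : (i : ℕ) + 1 = l := le_antisymm i.isLt (not_lt.mp h)
      rw [dif_neg h, h1, hil, hGl]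
      simp
  have hspan : Submodule.span ℂ (Set.range fun i : Fin l => (G ^ (i : ℕ)) v) = ⊤ := by
    have hmH : (Submodule.span ℂ (Set.range fun i : Fin l => (G ^ (i : ℕ)) v)).map H
        ≤ Submodule.span ℂ (Set.range fun i : Fin l => (G ^ (i : ℕ)) v) := by
      rw [Submodule.map_span_le]
      rintro - ⟨i, rfl⟩
      rw [hweig i]
      exact Submodule.smul_mem _ _ (Submodule.subset_span ⟨i, rfl⟩)
    have hmG : (Submodule.span ℂ (Set.range fun i : Fin l => (G ^ (i : ℕ)) v)).map G
        ≤ Submodule.span ℂ (Set.range fun i : Fin l => (G ^ (i : ℕ)) v) := by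
      rw [Submodule.map_span_le]
      rintro - ⟨i, rfl⟩
      rw [hGw i]
      split
      · exact Submodule.subset_span ⟨_, rfl⟩
      · exact Submodule.smul_mem _ _ (Submodule.subset_span ⟨_, rfl⟩)
    rcases hirr _ hmH hmG with hbot | htop
    · exfalso
      have hmem : v ∈ Submodule.span ℂ (Set.range fun i : Fin l => (G ^ (i : ℕ)) v) :=
        Submodule.subset_span ⟨⟨0, hl⟩, by simp⟩
      rw [hbot] at hmem
      exact hv (by simpa using hmem)
    · exact htop
  refine ⟨Basis.mk hli (by rw [hspan]), ?_, ?_⟩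
  · intro i; simpa only [Basis.mk_apply] using hweig i
  · intro i
    simp only [Basis.mk_apply]
    rw [hGw i]

/-- for `A = ℂ⟨h^{±1}, g^{±1}⟩/(hg - ε^d gh)` with `ε` a primitive
`l`-th root of unity and `gcd(l,d) = 1`, every irreducible finite-dimensional
representation on which `h^l, g^l` act by fixed nonzero scalars `α, β` has dimension
`l`, and any two such representations are isomorphic. -/
theorem stmt12 {l : ℕ} (hl : 0 < l) {ε : ℂ} (hε : IsPrimitiveRoot ε l)
    (d : ℤ) (hcop : IsCoprime (l : ℤ) d)
    (α β : ℂ) (hα : α ≠ 0) (hβ : β ≠ 0)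
    {V W : Type*} [AddCommGroup V] [Module ℂ V] [AddCommGroup W] [Module ℂ W]
    [Nontrivial V] [FiniteDimensional ℂ V] [Nontrivial W] [FiniteDimensional ℂ W]
    (Hv Gv : Module.End ℂ V) (Hw Gw : Module.End ℂ W)
    (hHv : IsUnit Hv) (hGv : IsUnit Gv) (hHw : IsUnit Hw) (hGw : IsUnit Gw)
    (hrelV : Hv * Gv = ε ^ d • (Gv * Hv)) (hrelW : Hw * Gw = ε ^ d • (Gw * Hw))
    (hHlV : Hv ^ l = α • (1 : Module.End ℂ V)) (hGlV : Gv ^ l = β • (1 : Module.End ℂ V))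
    (hHlW : Hw ^ l = α • (1 : Module.End ℂ W)) (hGlW : Gw ^ l = β • (1 : Module.End ℂ W))
    (hirrV : ∀ U : Submodule ℂ V, U.map Hv ≤ U → U.map Gv ≤ U → U = ⊥ ∨ U = ⊤)
    (hirrW : ∀ U : Submodule ℂ W, U.map Hw ≤ U → U.map Gw ≤ U → U = ⊥ ∨ U = ⊤) :
    Module.finrank ℂ V = l ∧
      ∃ e : V ≃ₗ[ℂ] W, (∀ v, e (Hv v) = Hw (e v)) ∧ (∀ v, e (Gv v) = Gw (e v)) := by
  have : NeZero l := ⟨hl.ne'⟩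
  -- q = ε ^ d is a primitive l-th root of unity
  set n0 : ℕ := (d % (l : ℤ)).toNat with hn0
  have hmodnn : (0 : ℤ) ≤ d % (l : ℤ) := Int.emod_nonneg d (by exact_mod_cast hl.ne')
  have hn0cast : (n0 : ℤ) = d % (l : ℤ) := Int.toNat_of_nonneg hmodnn
  have hqeq : ε ^ d = ε ^ n0 := by
    conv_lhs => rw [← Int.emod_add_mul_ediv d (l : ℤ)]
    rw [zpow_add₀ (hε.ne_zero hl.ne'), zpow_mul, ← hn0cast]
    rw [show ((l : ℤ)) = ((l : ℕ) : ℤ) from rfl, zpow_natCast, zpow_natCast, hε.pow_eq_one]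
    simp
  have hcop' : Nat.Coprime n0 l := by
    have h1 : IsCoprime (l : ℤ) (d % (l : ℤ)) := by
      have h2 := hcop.add_mul_left_right (-(d / (l : ℤ)))
      rwa [show d + (l : ℤ) * -(d / (l : ℤ)) = d % (l : ℤ) by rw [Int.emod_def]; ring] at h2
    rw [← hn0cast] at h1
    have h3 := Int.isCoprime_iff_gcd_eq_one.mp h1
    rwa [Int.gcd_natCast_natCast, ← Nat.coprime_iff_gcd_eq_one, Nat.coprime_comm] at h3
  have hq : IsPrimitiveRoot (ε ^ d) l := by
    rw [hqeq]; exact hε.pow_of_coprime n0 hcop'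
  -- eigenvector in V
  obtain ⟨lam, hlam⟩ := Module.End.exists_eigenvalue Hv
  obtain ⟨v, hv⟩ := hlam.exists_hasEigenvector
  have hvne : v ≠ 0 := hv.right
  have hlampow : lam ^ l = α := by
    have h1 : (Hv ^ l) v = lam ^ l • v := hv.pow_apply l
    rw [hHlV] at h1
    simp only [LinearMap.smul_apply, Module.End.one_apply] at h1
    by_contra hne
    apply hvne
    have h2 := sub_eq_zero.mpr h1
    rw [← sub_smul] at h2
    rcases smul_eq_zero.mp h2 with h | h
    · exact absurd (sub_eq_zero.mp h).symm hne
    · exact h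
  have hlamne : lam ≠ 0 := by
    intro h; rw [h, zero_pow hl.ne'] at hlampow; exact hα hlampow.symm
  -- eigenvector in W with the SAME eigenvalue lam
  obtain ⟨mu, hmu⟩ := Module.End.exists_eigenvalue Hw
  obtain ⟨w0, hw0⟩ := hmu.exists_hasEigenvector
  have hw0ne : w0 ≠ 0 := hw0.right
  have hmupow : mu ^ l = α := by
    have h1 : (Hw ^ l) w0 = mu ^ l • w0 := hw0.pow_apply l
    rw [hHlW] at h1
    simp only [LinearMap.smul_apply, Module.End.one_apply] at h1
    by_contra hne
    apply hw0ne
    have h2 := sub_eq_zero.mpr h1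
    rw [← sub_smul] at h2
    rcases smul_eq_zero.mp h2 with h | h
    · exact absurd (sub_eq_zero.mp h).symm hne
    · exact h
  have hmune : mu ≠ 0 := by
    intro h; rw [h, zero_pow hl.ne'] at hmupow; exact hα hmupow.symm
  have hratio : (lam / mu) ^ l = 1 := by
    rw [div_pow, hlampow, hmupow, div_self hα]
  obtain ⟨m, -, hm⟩ := hq.eq_pow_of_pow_eq_one hratio
  have hwne : (Gw ^ m) w0 ≠ 0 := unit_apply_ne (hGw.pow m) hw0ne
  have hweig : Hw ((Gw ^ m) w0) = lam • (Gw ^ m) w0 := by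
    have h2 := congrArg (fun f : Module.End ℂ W => f w0) (comm_pow Hw Gw (ε ^ d) hrelW m)
    simp only [Module.End.mul_apply, LinearMap.smul_apply] at h2
    rw [h2, hw0.apply_eq_smul, map_smul, smul_smul, hm, div_mul_cancel₀ _ hmune]
  obtain ⟨bV, hbVH, hbVG⟩ := key hl hq Hv Gv hGv hrelV hGlV hirrV hvne hlamne hv.apply_eq_smul
  obtain ⟨bW, hbWH, hbWG⟩ := key hl hq Hw Gw hGw hrelW hGlW hirrW hwne hlamne hweig
  constructor
  · rw [finrank_eq_card_basis bV, Fintype.card_fin]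
  · refine ⟨bV.equiv bW (Equiv.refl _), ?_, ?_⟩
    · have h4 : ((bV.equiv bW (Equiv.refl _) : V →ₗ[ℂ] W) ∘ₗ Hv)
          = (Hw : W →ₗ[ℂ] W) ∘ₗ (bV.equiv bW (Equiv.refl _) : V →ₗ[ℂ] W) := by
        apply bV.ext
        intro i
        simp only [LinearMap.comp_apply, LinearEquiv.coe_coe]
        rw [hbVH i, map_smul, bV.equiv_apply, Equiv.refl_apply, hbWH i]
      intro x
      exact congrArg (fun f : V →ₗ[ℂ] W => f x) h4
    · have h4 : ((bV.equiv bW (Equiv.refl _) : V →ₗ[ℂ] W) ∘ₗ Gv)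
          = (Gw : W →ₗ[ℂ] W) ∘ₗ (bV.equiv bW (Equiv.refl _) : V →ₗ[ℂ] W) := by
        apply bV.ext
        intro i
        simp only [LinearMap.comp_apply, LinearEquiv.coe_coe]
        rw [hbVG i, bV.equiv_apply, Equiv.refl_apply, hbWG i]
        split
        · rw [bV.equiv_apply, Equiv.refl_apply]
        · rw [map_smul, bV.equiv_apply, Equiv.refl_apply]
      intro x
      exact congrArg (fun f : V →ₗ[ℂ] W => f x) h4
end

section
/- In the quantum Weyl algebra W at a primitive admissible l-th root of unity ε, the elements w_i := 1 + Σ_{k ≤ i}(ε^{s_k} - 1) y_k x_k satisfy: y_i w_j = ε^{-s_i} w_j y_i and x_i w_j = ε^{s_i} w_j x_i for i ≤ j, while w_j commutes with x_i and y_i for i > j; consequently w_i^l commutes with all x_j and y_j, i.e., f_i := w_i^l is central in W_ε. -/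
/-- in the quantum Weyl algebra at an admissible primitive `l`-th root
of unity `ε`, the elements `w_m = 1 + Σ_{k<m} (ε^{s_k} - 1) y_k x_k` satisfy
`y_i w_j = ε^{-s_i} w_j y_i` and `x_i w_j = ε^{s_i} w_j x_i` for `i ≤ j`, commute
with `x_i, y_i` for `i > j`, and consequently each `w_m^l` commutes with all the
generators, i.e. is central. -/
theorem stmt17 {W : Type*} [Ring W] [Algebra ℂ W] {n l : ℕ} (hl : 0 < l)
    {ε : ℂ} (hε : IsPrimitiveRoot ε l)
    (s : Fin n → ℤ) (hcop : ∀ i, IsCoprime (l : ℤ) (s i))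
    (σ : Fin n → Fin n → ℤ) (hσ : ∀ i j, σ j i = - σ i j)
    (x y : Fin n → W) (w : ℕ → W)
    (hw : ∀ m : ℕ, w m = 1 + ∑ k ∈ Finset.univ.filter (fun k : Fin n => (k : ℕ) < m),
      (ε ^ (s k) - 1) • (y k * x k))
    (hyy : ∀ i j, y i * y j = ε ^ (σ i j) • (y j * y i))
    (hxx : ∀ i j, i < j → x i * x j = ε ^ (s i + σ i j) • (x j * x i))
    (hxylt : ∀ i j, i < j → x i * y j = ε ^ (σ j i) • (y j * x i))
    (hxygt : ∀ i j, j < i → x i * y j = ε ^ (s j + σ j i) • (y j * x i))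
    (hxyeq : ∀ i : Fin n, x i * y i = ε ^ (s i) • (y i * x i) + w (i : ℕ))
    (hgen : Algebra.adjoin ℂ (Set.range x ∪ Set.range y) = ⊤) :
    (∀ i j : Fin n, (i : ℕ) ≤ (j : ℕ) →
      y i * w ((j : ℕ) + 1) = ε ^ (-(s i)) • (w ((j : ℕ) + 1) * y i) ∧
      x i * w ((j : ℕ) + 1) = ε ^ (s i) • (w ((j : ℕ) + 1) * x i)) ∧
    (∀ i j : Fin n, (j : ℕ) < (i : ℕ) →
      y i * w ((j : ℕ) + 1) = w ((j : ℕ) + 1) * y i ∧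
      x i * w ((j : ℕ) + 1) = w ((j : ℕ) + 1) * x i) ∧
    (∀ m : ℕ, ∀ i : Fin n,
      w m ^ l * x i = x i * w m ^ l ∧ w m ^ l * y i = y i * w m ^ l) ∧
    (∀ m : ℕ, w m ^ l ∈ Subalgebra.center ℂ W) := by
  have hε0 : ε ≠ 0 := hε.ne_zero hl.ne'
  have hεl : ε ^ ((l : ℕ) : ℤ) = 1 := by
    rw [zpow_natCast]; exact hε.pow_eq_one
  -- per-term commutation lemmas
  have comm_y_lt : ∀ i k : Fin n, (k : ℕ) < (i : ℕ) →
      y i * (y k * x k) = (y k * x k) * y i := by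
    intro i k hk
    have hki : k < i := hk
    calc y i * (y k * x k) = (y i * y k) * x k := by rw [mul_assoc]
      _ = ε ^ (σ i k) • (y k * (y i * x k)) := by
          rw [hyy i k, smul_mul_assoc, mul_assoc]
      _ = y k * (x k * y i) := by rw [hxylt k i hki, mul_smul_comm]
      _ = (y k * x k) * y i := by rw [mul_assoc]
  have comm_y_gt : ∀ i k : Fin n, (i : ℕ) < (k : ℕ) →
      ε ^ (s i) • (y i * (y k * x k)) = (y k * x k) * y i := by
    intro i k hik'
    have hik : i < k := hik'
    calc ε ^ (s i) • (y i * (y k * x k))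
        = ε ^ (s i) • ((y i * y k) * x k) := by rw [mul_assoc]
      _ = (ε ^ (s i) * ε ^ (σ i k)) • (y k * (y i * x k)) := by
          rw [hyy i k, smul_mul_assoc, mul_assoc, smul_smul]
      _ = ε ^ (s i + σ i k) • (y k * (y i * x k)) := by rw [← zpow_add₀ hε0]
      _ = y k * (x k * y i) := by rw [hxygt k i hik, mul_smul_comm]
      _ = (y k * x k) * y i := by rw [mul_assoc]
  have comm_x_lt : ∀ i k : Fin n, (k : ℕ) < (i : ℕ) →
      x i * (y k * x k) = (y k * x k) * x i := by
    intro i k hk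
    have hki : k < i := hk
    calc x i * (y k * x k) = (x i * y k) * x k := by rw [mul_assoc]
      _ = ε ^ (s k + σ k i) • (y k * (x i * x k)) := by
          rw [hxygt i k hki, smul_mul_assoc, mul_assoc]
      _ = y k * (x k * x i) := by rw [hxx k i hki, mul_smul_comm]
      _ = (y k * x k) * x i := by rw [mul_assoc]
  have comm_x_gt : ∀ i k : Fin n, (i : ℕ) < (k : ℕ) →
      x i * (y k * x k) = ε ^ (s i) • ((y k * x k) * x i) := by
    intro i k hik'
    have hik : i < k := hik'
    calc x i * (y k * x k) = (x i * y k) * x k := by rw [mul_assoc]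
      _ = ε ^ (σ k i) • (y k * (x i * x k)) := by
          rw [hxylt i k hik, smul_mul_assoc, mul_assoc]
      _ = (ε ^ (σ k i) * ε ^ (s i + σ i k)) • (y k * (x k * x i)) := by
          rw [hxx i k hik, mul_smul_comm, smul_smul]
      _ = ε ^ (s i) • ((y k * x k) * x i) := by
          rw [← zpow_add₀ hε0, show σ k i + (s i + σ i k) = s i by rw [hσ i k]; ring,
            mul_assoc]
  -- commuting with w m when all indices are below
  have key0 : ∀ (g : W) (m : ℕ),
      (∀ k : Fin n, (k : ℕ) < m → g * (y k * x k) = (y k * x k) * g) →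
      g * w m = w m * g := by
    intro g m h
    rw [hw m, mul_add, add_mul, mul_one, one_mul, Finset.mul_sum, Finset.sum_mul]
    congr 1
    refine Finset.sum_congr rfl fun k hk => ?_
    rw [mul_smul_comm, smul_mul_assoc, h k (Finset.mem_filter.mp hk).2]
  -- splitting of w
  have hsplit : ∀ m1 m2 : ℕ, m1 ≤ m2 → w m2 = w m1 +
      ∑ k ∈ (Finset.univ.filter (fun k : Fin n => (k : ℕ) < m2)) \
        (Finset.univ.filter (fun k : Fin n => (k : ℕ) < m1)),
        (ε ^ (s k) - 1) • (y k * x k) := by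
    intro m1 m2 h
    have hss : (Finset.univ.filter (fun k : Fin n => (k : ℕ) < m1)) ⊆
        (Finset.univ.filter (fun k : Fin n => (k : ℕ) < m2)) := by
      intro k hk
      simp only [Finset.mem_filter, Finset.mem_univ, true_and] at hk ⊢
      omega
    rw [hw m1, hw m2, ← Finset.sum_sdiff hss]
    abel
  have hstep : ∀ i : Fin n, w ((i : ℕ) + 1) = w (i : ℕ) + (ε ^ (s i) - 1) • (y i * x i) := by
    intro i
    rw [hsplit (i : ℕ) ((i : ℕ) + 1) (Nat.le_succ _)]
    congr 1
    have : (Finset.univ.filter (fun k : Fin n => (k : ℕ) < (i : ℕ) + 1)) \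
        (Finset.univ.filter (fun k : Fin n => (k : ℕ) < (i : ℕ))) = {i} := by
      ext k
      simp only [Finset.mem_sdiff, Finset.mem_filter, Finset.mem_univ, true_and,
        Finset.mem_singleton, Fin.ext_iff]
      omega
    rw [this, Finset.sum_singleton]
  -- the crucial i = k computation
  have claim2y : ∀ i : Fin n,
      ε ^ (s i) • (y i * w ((i : ℕ) + 1)) = w ((i : ℕ) + 1) * y i := by
    intro i
    have hwy : y i * w (i : ℕ) = w (i : ℕ) * y i :=
      key0 (y i) (i : ℕ) (fun k hk => comm_y_lt i k hk)
    have h1 : (y i * x i) * y i =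
        ε ^ (s i) • (y i * (y i * x i)) + w (i : ℕ) * y i := by
      rw [mul_assoc, hxyeq i, mul_add, mul_smul_comm, hwy]
    rw [hstep i, mul_add, add_mul, mul_smul_comm, smul_mul_assoc, h1, hwy]
    match_scalars <;> ring
  have claim2x : ∀ i : Fin n,
      x i * w ((i : ℕ) + 1) = ε ^ (s i) • (w ((i : ℕ) + 1) * x i) := by
    intro i
    have hwx : x i * w (i : ℕ) = w (i : ℕ) * x i :=
      key0 (x i) (i : ℕ) (fun k hk => comm_x_lt i k hk)
    have h1 : x i * (y i * x i) =
        ε ^ (s i) • ((y i * x i) * x i) + w (i : ℕ) * x i := by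
      rw [← mul_assoc, hxyeq i, add_mul, smul_mul_assoc]
    rw [hstep i, mul_add, add_mul, mul_smul_comm, smul_mul_assoc, h1, hwx]
    match_scalars <;> ring
  -- twisted commutation with w m
  have keyY : ∀ (i : Fin n) (m : ℕ), (i : ℕ) < m →
      ε ^ (s i) • (y i * w m) = w m * y i := by
    intro i m him
    rw [hsplit ((i : ℕ) + 1) m him, mul_add, add_mul, smul_add, claim2y i]
    congr 1
    rw [Finset.mul_sum, Finset.smul_sum, Finset.sum_mul]
    refine Finset.sum_congr rfl fun k hk => ?_
    have hik : (i : ℕ) < (k : ℕ) := by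
      rcases Finset.mem_sdiff.mp hk with ⟨hk1, hk2⟩
      simp only [Finset.mem_filter, Finset.mem_univ, true_and] at hk2
      omega
    rw [mul_smul_comm, smul_comm, comm_y_gt i k hik, smul_mul_assoc]
  have keyX : ∀ (i : Fin n) (m : ℕ), (i : ℕ) < m →
      x i * w m = ε ^ (s i) • (w m * x i) := by
    intro i m him
    rw [hsplit ((i : ℕ) + 1) m him, mul_add, add_mul, smul_add, claim2x i]
    congr 1
    rw [Finset.mul_sum, Finset.sum_mul, Finset.smul_sum]
    refine Finset.sum_congr rfl fun k hk => ?_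
    have hik : (i : ℕ) < (k : ℕ) := by
      rcases Finset.mem_sdiff.mp hk with ⟨hk1, hk2⟩
      simp only [Finset.mem_filter, Finset.mem_univ, true_and] at hk2
      omega
    rw [mul_smul_comm, comm_x_gt i k hik, smul_mul_assoc]
    match_scalars <;> ring
  have keyY' : ∀ (i : Fin n) (m : ℕ), (i : ℕ) < m →
      y i * w m = ε ^ (-(s i)) • (w m * y i) := by
    intro i m him
    rw [← keyY i m him, smul_smul, ← zpow_add₀ hε0, neg_add_cancel, zpow_zero, one_smul]
  -- powers
  have powtw : ∀ (g u : W) (z : ℤ), g * u = ε ^ z • (u * g) →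
      ∀ N : ℕ, g * u ^ N = ε ^ ((N : ℤ) * z) • (u ^ N * g) := by
    intro g u z h N
    induction N with
    | zero => simp
    | succ N ih =>
      rw [pow_succ, ← mul_assoc, ih, smul_mul_assoc, mul_assoc, h, mul_smul_comm,
        smul_smul, ← zpow_add₀ hε0,
        show (N : ℤ) * z + z = ((N + 1 : ℕ) : ℤ) * z by push_cast; ring,
        ← mul_assoc, ← pow_succ]
  have hpowx : ∀ (m : ℕ) (i : Fin n), w m ^ l * x i = x i * w m ^ l := by
    intro m i
    rcases lt_or_ge (i : ℕ) m with h | h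
    · have hkey := powtw (x i) (w m) (s i) (keyX i m h) l
      rw [zpow_mul, hεl, one_zpow, one_smul] at hkey
      exact hkey.symm
    · have hc : Commute (x i) (w m) :=
        key0 (x i) m (fun k hk => comm_x_lt i k (lt_of_lt_of_le hk h))
      exact ((hc.pow_right l).eq).symm
  have hpowy : ∀ (m : ℕ) (i : Fin n), w m ^ l * y i = y i * w m ^ l := by
    intro m i
    rcases lt_or_ge (i : ℕ) m with h | h
    · have hkey := powtw (y i) (w m) (-(s i)) (keyY' i m h) l
      rw [show ((l : ℕ) : ℤ) * (-(s i)) = ((l : ℕ) : ℤ) * (-(s i)) from rfl,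
        zpow_mul, hεl, one_zpow, one_smul] at hkey
      exact hkey.symm
    · have hc : Commute (y i) (w m) :=
        key0 (y i) m (fun k hk => comm_y_lt i k (lt_of_lt_of_le hk h))
      exact ((hc.pow_right l).eq).symm
  refine ⟨?_, ?_, fun m i => ⟨hpowx m i, hpowy m i⟩, ?_⟩
  · intro i j hij
    exact ⟨keyY' i ((j : ℕ) + 1) (Nat.lt_succ_of_le hij),
      keyX i ((j : ℕ) + 1) (Nat.lt_succ_of_le hij)⟩
  · intro i j hij
    refine ⟨key0 (y i) _ (fun k hk => comm_y_lt i k (by omega)),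
      key0 (x i) _ (fun k hk => comm_x_lt i k (by omega))⟩
  · intro m
    rw [Subalgebra.mem_center_iff]
    intro b
    have hb : b ∈ Algebra.adjoin ℂ (Set.range x ∪ Set.range y) := by
      rw [hgen]; exact Algebra.mem_top
    induction hb using Algebra.adjoin_induction with
    | mem g hg =>
      rcases hg with ⟨i, rfl⟩ | ⟨i, rfl⟩
      · exact (hpowx m i).symm
      · exact (hpowy m i).symm
    | algebraMap r => exact Algebra.commutes r _
    | add a b ha hb hpa hpb => rw [add_mul, mul_add, hpa, hpb]
    | mul a b ha hb hpa hpb => rw [mul_assoc, hpb, ← mul_assoc, hpa, mul_assoc]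
end
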